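/- arXiv:2011.01572 — 2 statements merged into one kernel-verified Lean document; each statement's English description precedes it below -/
import Mathlib

section
/- In 𝒜q the following relations hold. For all integers k, ℓ ≥ 1: [G_k, G̃_{ℓ+1}] − [G_ℓ, G̃_{k+1}] = ρ(q+q⁻¹)·([W_{-ℓ}, W_{k+1}]_q − [W_{-k}, W_{ℓ+1}]_q) and [G̃_k, G_{ℓ+1}] − [G̃_ℓ, G_{k+1}] = ρ(q+q⁻¹)·([W_{ℓ+1}, W_{-k}]_q − [W_{k+1}, W_{-ℓ}]_q). For all k, ℓ ∈ ℕ: [G_{k+1}, G̃_{ℓ+1}]_q − [G_{ℓ+1}, G̃_{k+1}]_q = ρ(q+q⁻¹)·([W_{-ℓ}, W_{k+2}] − [W_{-k}, W_{ℓ+2}]) and [G̃_{k+1}, G_{ℓ+1}]_q − [G̃_{ℓ+1}, G_{k+1}]_q = ρ(q+q⁻¹)·([W_{ℓ+1}, W_{-k-1}] − [W_{k+1}, W_{-ℓ-1}]). -/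
/- STATEMENT 1: further relations (Lemma 2.3 of the paper) in 𝒜q. -/

noncomputable section

namespace Alt

/-- The base field `F = ℚ(q)`. -/
abbrev F : Type := RatFunc ℚ

/-- The indeterminate `q`. -/
def q : F := RatFunc.X

/-- Commutator `[x,y] = xy - yx`. -/
def br {A : Type*} [Ring A] (x y : A) : A := x * y - y * x

/-- `q`-commutator `[x,y]_q = q·xy - q⁻¹·yx`. -/
def qbr {A : Type*} [Ring A] [Algebra F A] (x y : A) : A :=
  q • (x * y) - q⁻¹ • (y * x)

/-- `q⁻¹`-commutator `[x,y]_{q⁻¹} = q⁻¹·xy - q·yx`. -/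
def qbr' {A : Type*} [Ring A] [Algebra F A] (x y : A) : A :=
  q⁻¹ • (x * y) - q • (y * x)

/-- Generators of the algebra `𝒜q`: `wm k ↦ W_{-k}`, `wp k ↦ W_{k+1}`,
`g k ↦ G_{k+1}`, `gt k ↦ G̃_{k+1}`. -/
inductive Gen : Type
  | wm : ℕ → Gen
  | wp : ℕ → Gen
  | g : ℕ → Gen
  | gt : ℕ → Gen

/-- The free `F`-algebra on the generators. -/
abbrev FA : Type := FreeAlgebra F Gen

/-- `W_{-k}` in the free algebra. -/
def fWm (k : ℕ) : FA := FreeAlgebra.ι F (Gen.wm k)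
/-- `W_{k+1}` in the free algebra. -/
def fWp (k : ℕ) : FA := FreeAlgebra.ι F (Gen.wp k)
/-- `G_{k+1}` in the free algebra. -/
def fG (k : ℕ) : FA := FreeAlgebra.ι F (Gen.g k)
/-- `G̃_{k+1}` in the free algebra. -/
def fGt (k : ℕ) : FA := FreeAlgebra.ι F (Gen.gt k)

/-- The defining relations of `𝒜q` (with parameter `ρ`). -/
inductive rel (ρ : F) : FA → FA → Prop
  | r1a (k : ℕ) : rel ρ (br (fWm 0) (fWp k)) ((q + q⁻¹)⁻¹ • (fGt k - fG k))
  | r1b (k : ℕ) : rel ρ (br (fWm k) (fWp 0)) ((q + q⁻¹)⁻¹ • (fGt k - fG k))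
  | r2a (k : ℕ) : rel ρ (qbr (fWm 0) (fG k)) (ρ • fWm (k + 1))
  | r2b (k : ℕ) : rel ρ (qbr (fGt k) (fWm 0)) (ρ • fWm (k + 1))
  | r3a (k : ℕ) : rel ρ (qbr (fG k) (fWp 0)) (ρ • fWp (k + 1))
  | r3b (k : ℕ) : rel ρ (qbr (fWp 0) (fGt k)) (ρ • fWp (k + 1))
  | r4a (k l : ℕ) : rel ρ (br (fWm k) (fWm l)) 0
  | r4b (k l : ℕ) : rel ρ (br (fWp k) (fWp l)) 0
  | r5 (k l : ℕ) : rel ρ (br (fWm k) (fWp l) + br (fWp k) (fWm l)) 0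
  | r6 (k l : ℕ) : rel ρ (br (fWm k) (fG l) + br (fG k) (fWm l)) 0
  | r7 (k l : ℕ) : rel ρ (br (fWm k) (fGt l) + br (fGt k) (fWm l)) 0
  | r8 (k l : ℕ) : rel ρ (br (fWp k) (fG l) + br (fG k) (fWp l)) 0
  | r9 (k l : ℕ) : rel ρ (br (fWp k) (fGt l) + br (fGt k) (fWp l)) 0
  | r10a (k l : ℕ) : rel ρ (br (fG k) (fG l)) 0
  | r10b (k l : ℕ) : rel ρ (br (fGt k) (fGt l)) 0
  | r11 (k l : ℕ) : rel ρ (br (fGt k) (fG l) + br (fG k) (fGt l)) 0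

/-- The algebra `𝒜q`: the quotient of the free algebra by the two-sided ideal
generated by the defining relations. -/
abbrev Aq (ρ : F) : Type := RingQuot (rel ρ)

/-- The generator `W_{-k}` of `𝒜q`. -/
def Wm (ρ : F) (k : ℕ) : Aq ρ := RingQuot.mkAlgHom F (rel ρ) (fWm k)
/-- The generator `W_{k+1}` of `𝒜q`. -/
def Wp (ρ : F) (k : ℕ) : Aq ρ := RingQuot.mkAlgHom F (rel ρ) (fWp k)
/-- The generator `G_{k+1}` of `𝒜q`. -/
def G (ρ : F) (k : ℕ) : Aq ρ := RingQuot.mkAlgHom F (rel ρ) (fG k)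
/-- The generator `G̃_{k+1}` of `𝒜q`. -/
def Gt (ρ : F) (k : ℕ) : Aq ρ := RingQuot.mkAlgHom F (rel ρ) (fGt k)


/-! ### Auxiliary lemmas -/

lemma q_ne_zero : (q : F) ≠ 0 := RatFunc.X_ne_zero

lemma qq_ne_zero : (q + q⁻¹ : F) ≠ 0 := by
  intro h
  have h1 : (q : F) ≠ 0 := q_ne_zero
  have h2 : (q * q + 1 : F) = 0 := by
    have := congrArg (· * q) h
    field_simp at this
    linear_combination this
  have h3 : algebraMap (Polynomial ℚ) F (Polynomial.X * Polynomial.X + 1) = 0 := by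
    rw [map_add, map_mul, map_one]
    simpa [q] using h2
  have h4 := RatFunc.algebraMap_injective ℚ (h3.trans (map_zero _).symm)
  have := congrArg (Polynomial.eval 0) h4
  simp at this

section Generic
set_option linter.unusedSectionVars false
variable {A : Type*} [Ring A] [Algebra F A]

lemma br_sub_right (x y z : A) : br x (y - z) = br x y - br x z := by
  simp only [br, mul_sub, sub_mul]; abel

lemma br_smul_right (a : F) (x y : A) : br x (a • y) = a • br x y := by
  simp only [br, mul_smul_comm, smul_mul_assoc, smul_sub]

lemma br_swap (x y : A) : br x y = - br y x := by simp only [br, neg_sub]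

lemma br_neg_right (x y : A) : br x (-y) = - br x y := by
  simp only [br, mul_neg, neg_mul]; abel

lemma qbr_smul_left (a : F) (x y : A) : qbr (a • x) y = a • qbr x y := by
  simp only [qbr, smul_mul_assoc, mul_smul_comm, smul_sub, smul_smul,
    mul_comm q a, mul_comm q⁻¹ a]

lemma qbr_smul_right (a : F) (x y : A) : qbr x (a • y) = a • qbr x y := by
  simp only [qbr, smul_mul_assoc, mul_smul_comm, smul_sub, smul_smul,
    mul_comm q a, mul_comm q⁻¹ a]

lemma qbr_sub_right (x y z : A) : qbr x (y - z) = qbr x y - qbr x z := by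
  simp only [qbr, mul_sub, sub_mul, smul_sub]; abel

lemma qbr_neg_right (x y : A) : qbr x (-y) = - qbr x y := by
  simp only [qbr, mul_neg, neg_mul, smul_neg]; abel

lemma qbr_comm {x y : A} (h : x * y = y * x) : qbr x y = qbr y x := by
  simp only [qbr, h]

lemma key1 (g a w : A) : br g (br a w) = qbr a (qbr g w) - qbr (qbr a g) w := by
  simp only [br, qbr, mul_sub, sub_mul, smul_sub, smul_mul_assoc, mul_smul_comm,
    smul_smul, mul_assoc, mul_inv_cancel₀ q_ne_zero, inv_mul_cancel₀ q_ne_zero, one_smul]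
  abel

lemma key3 (x g w : A) : br x (qbr g w) = qbr (br x g) w + qbr g (br x w) := by
  simp only [br, qbr, mul_sub, sub_mul, smul_sub, smul_mul_assoc, mul_smul_comm,
    smul_smul, mul_assoc, mul_inv_cancel₀ q_ne_zero, inv_mul_cancel₀ q_ne_zero, one_smul]
  abel

lemma key2 (u g h : A) (hgh : g * h = h * g) : qbr (qbr u g) h = qbr (qbr u h) g := by
  simp only [qbr, mul_sub, sub_mul, smul_sub, smul_mul_assoc, mul_smul_comm,
    smul_smul, mul_assoc, mul_inv_cancel₀ q_ne_zero, inv_mul_cancel₀ q_ne_zero, one_smul]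
  rw [hgh, ← mul_assoc h g, ← hgh, mul_assoc]
  abel

end Generic

section Relations
variable (ρ : F)

lemma map_br (x y : FA) :
    RingQuot.mkAlgHom F (rel ρ) (br x y) =
      br (RingQuot.mkAlgHom F (rel ρ) x) (RingQuot.mkAlgHom F (rel ρ) y) := by
  simp only [br, map_sub, map_mul]

lemma map_qbr (x y : FA) :
    RingQuot.mkAlgHom F (rel ρ) (qbr x y) =
      qbr (RingQuot.mkAlgHom F (rel ρ) x) (RingQuot.mkAlgHom F (rel ρ) y) := by
  simp only [qbr, map_sub, map_smul, map_mul]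

lemma e1a (k : ℕ) : br (Wm ρ 0) (Wp ρ k) = (q + q⁻¹)⁻¹ • (Gt ρ k - G ρ k) := by
  have h := RingQuot.mkAlgHom_rel F (rel.r1a (ρ := ρ) k)
  rw [map_br, map_smul, map_sub] at h
  exact h

lemma e1b (k : ℕ) : br (Wm ρ k) (Wp ρ 0) = (q + q⁻¹)⁻¹ • (Gt ρ k - G ρ k) := by
  have h := RingQuot.mkAlgHom_rel F (rel.r1b (ρ := ρ) k)
  rw [map_br, map_smul, map_sub] at h
  exact h

lemma e2a (k : ℕ) : qbr (Wm ρ 0) (G ρ k) = ρ • Wm ρ (k + 1) := by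
  have h := RingQuot.mkAlgHom_rel F (rel.r2a (ρ := ρ) k)
  rw [map_qbr, map_smul] at h
  exact h

lemma e2b (k : ℕ) : qbr (Gt ρ k) (Wm ρ 0) = ρ • Wm ρ (k + 1) := by
  have h := RingQuot.mkAlgHom_rel F (rel.r2b (ρ := ρ) k)
  rw [map_qbr, map_smul] at h
  exact h

lemma e3a (k : ℕ) : qbr (G ρ k) (Wp ρ 0) = ρ • Wp ρ (k + 1) := by
  have h := RingQuot.mkAlgHom_rel F (rel.r3a (ρ := ρ) k)
  rw [map_qbr, map_smul] at h
  exact h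

lemma e3b (k : ℕ) : qbr (Wp ρ 0) (Gt ρ k) = ρ • Wp ρ (k + 1) := by
  have h := RingQuot.mkAlgHom_rel F (rel.r3b (ρ := ρ) k)
  rw [map_qbr, map_smul] at h
  exact h

lemma e6 (k l : ℕ) : br (Wm ρ k) (G ρ l) = br (Wm ρ l) (G ρ k) := by
  have h := RingQuot.mkAlgHom_rel F (rel.r6 (ρ := ρ) k l)
  rw [map_add, map_br, map_br, map_zero] at h
  rw [br_swap (Wm ρ l) (G ρ k)]
  exact eq_neg_of_add_eq_zero_left h

lemma e9 (k l : ℕ) : br (Wp ρ k) (Gt ρ l) = br (Wp ρ l) (Gt ρ k) := by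
  have h := RingQuot.mkAlgHom_rel F (rel.r9 (ρ := ρ) k l)
  rw [map_add, map_br, map_br, map_zero] at h
  rw [br_swap (Wp ρ l) (Gt ρ k)]
  exact eq_neg_of_add_eq_zero_left h

lemma e10a (k l : ℕ) : br (G ρ k) (G ρ l) = 0 := by
  have h := RingQuot.mkAlgHom_rel F (rel.r10a (ρ := ρ) k l)
  rw [map_br, map_zero] at h
  exact h

lemma e10b (k l : ℕ) : br (Gt ρ k) (Gt ρ l) = 0 := by
  have h := RingQuot.mkAlgHom_rel F (rel.r10b (ρ := ρ) k l)
  rw [map_br, map_zero] at h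
  exact h

lemma Gcomm (k l : ℕ) : G ρ k * G ρ l = G ρ l * G ρ k := by
  have h := e10a ρ k l
  rw [br] at h
  exact sub_eq_zero.mp h

lemma Gtcomm (k l : ℕ) : Gt ρ k * Gt ρ l = Gt ρ l * Gt ρ k := by
  have h := e10b ρ k l
  rw [br] at h
  exact sub_eq_zero.mp h

end Relations

section Derivation
variable (ρ : F)

lemma smul_cancel {hρ : ρ ≠ 0} {x y : Aq ρ} (h : ρ • x = ρ • y) : x = y := by
  have h2 := congrArg (fun z => ρ⁻¹ • z) h
  simpa [smul_smul, inv_mul_cancel₀ hρ] using h2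

/-- `[W_{-l-1}, G_{k+1}]_q` is symmetric under exchanging `(k,l)`. -/
lemma L1 (hρ : ρ ≠ 0) (k l : ℕ) :
    qbr (Wm ρ (l + 1)) (G ρ k) = qbr (Wm ρ (k + 1)) (G ρ l) := by
  apply smul_cancel ρ (hρ := hρ)
  calc ρ • qbr (Wm ρ (l + 1)) (G ρ k)
      = qbr (ρ • Wm ρ (l + 1)) (G ρ k) := (qbr_smul_left ρ _ _).symm
    _ = qbr (qbr (Wm ρ 0) (G ρ l)) (G ρ k) := by rw [e2a]
    _ = qbr (qbr (Wm ρ 0) (G ρ k)) (G ρ l) := key2 _ _ _ (Gcomm ρ l k)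
    _ = qbr (ρ • Wm ρ (k + 1)) (G ρ l) := by rw [e2a]
    _ = ρ • qbr (Wm ρ (k + 1)) (G ρ l) := qbr_smul_left ρ _ _

/-- `[W_{l+2}, G̃_{k+1}]_q` is symmetric under exchanging `(k,l)`. -/
lemma L2 (hρ : ρ ≠ 0) (k l : ℕ) :
    qbr (Wp ρ (l + 1)) (Gt ρ k) = qbr (Wp ρ (k + 1)) (Gt ρ l) := by
  apply smul_cancel ρ (hρ := hρ)
  calc ρ • qbr (Wp ρ (l + 1)) (Gt ρ k)
      = qbr (ρ • Wp ρ (l + 1)) (Gt ρ k) := (qbr_smul_left ρ _ _).symm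
    _ = qbr (qbr (Wp ρ 0) (Gt ρ l)) (Gt ρ k) := by rw [e3b]
    _ = qbr (qbr (Wp ρ 0) (Gt ρ k)) (Gt ρ l) := key2 _ _ _ (Gtcomm ρ l k)
    _ = qbr (ρ • Wp ρ (k + 1)) (Gt ρ l) := by rw [e3b]
    _ = ρ • qbr (Wp ρ (k + 1)) (Gt ρ l) := qbr_smul_left ρ _ _

lemma hDiff (l : ℕ) :
    Gt ρ l - G ρ l = (q + q⁻¹) • br (Wm ρ l) (Wp ρ 0) := by
  rw [e1b, smul_smul, mul_inv_cancel₀ qq_ne_zero, one_smul]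

lemma hDiff' (l : ℕ) :
    Gt ρ l - G ρ l = (q + q⁻¹) • br (Wm ρ 0) (Wp ρ l) := by
  rw [e1a, smul_smul, mul_inv_cancel₀ qq_ne_zero, one_smul]

lemma FP (k l : ℕ) : br (G ρ k) (Gt ρ (l + 1)) =
    (q + q⁻¹) • (ρ • qbr (Wm ρ (l + 1)) (Wp ρ (k + 1)) -
      qbr (qbr (Wm ρ (l + 1)) (G ρ k)) (Wp ρ 0)) := by
  have h0 : br (G ρ k) (Gt ρ (l + 1)) = br (G ρ k) (Gt ρ (l + 1) - G ρ (l + 1)) := by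
    rw [br_sub_right, e10a, sub_zero]
  rw [h0, hDiff, br_smul_right, key1, e3a, qbr_smul_right]

lemma FQ (k l : ℕ) : br (Gt ρ k) (G ρ (l + 1)) =
    (q + q⁻¹) • (ρ • qbr (Wp ρ (l + 1)) (Wm ρ (k + 1)) -
      qbr (qbr (Wp ρ (l + 1)) (Gt ρ k)) (Wm ρ 0)) := by
  have h0 : br (Gt ρ k) (G ρ (l + 1)) = - br (Gt ρ k) (Gt ρ (l + 1) - G ρ (l + 1)) := by
    rw [br_sub_right, e10b, zero_sub, neg_neg]
  have h3 : br (Gt ρ k) (br (Wm ρ 0) (Wp ρ (l + 1))) =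
      - br (Gt ρ k) (br (Wp ρ (l + 1)) (Wm ρ 0)) := by
    rw [br_swap (Wm ρ 0) (Wp ρ (l + 1)), br_neg_right]
  rw [h0, hDiff', br_smul_right, h3, key1, e2b, qbr_smul_right, smul_neg, neg_neg]

lemma TP (k l : ℕ) : ρ • br (Wm ρ l) (Wp ρ (k + 1)) =
    qbr (br (Wm ρ k) (G ρ l)) (Wp ρ 0) +
      (q + q⁻¹)⁻¹ • (qbr (G ρ k) (Gt ρ l) - qbr (G ρ k) (G ρ l)) := by
  rw [← br_smul_right, ← e3a, key3, e6 ρ l k, e1b, qbr_smul_right, qbr_sub_right]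

lemma UP (k l : ℕ) : ρ • br (Wp ρ l) (Wm ρ (k + 1)) =
    qbr (br (Wp ρ k) (Gt ρ l)) (Wm ρ 0) -
      (q + q⁻¹)⁻¹ • (qbr (Gt ρ k) (Gt ρ l) - qbr (Gt ρ k) (G ρ l)) := by
  rw [← br_smul_right, ← e2b, key3, e9 ρ l k, br_swap (Wp ρ l) (Wm ρ 0), e1a,
    qbr_neg_right, qbr_smul_right, qbr_sub_right]
  abel

end Derivation

/-- Lemma 2.3 of the paper. The first two relations are for `k, ℓ ≥ 1`
(written here with `k+1, ℓ+1`, `k, ℓ ∈ ℕ`), the last two for all `k, ℓ ∈ ℕ`. -/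
theorem statement1 (ρ : F) (hρ : ρ ≠ 0) (k l : ℕ) :
    br (G ρ k) (Gt ρ (l + 1)) - br (G ρ l) (Gt ρ (k + 1)) =
      (ρ * (q + q⁻¹)) • (qbr (Wm ρ (l + 1)) (Wp ρ (k + 1)) -
        qbr (Wm ρ (k + 1)) (Wp ρ (l + 1))) ∧
    br (Gt ρ k) (G ρ (l + 1)) - br (Gt ρ l) (G ρ (k + 1)) =
      (ρ * (q + q⁻¹)) • (qbr (Wp ρ (l + 1)) (Wm ρ (k + 1)) -
        qbr (Wp ρ (k + 1)) (Wm ρ (l + 1))) ∧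
    qbr (G ρ k) (Gt ρ l) - qbr (G ρ l) (Gt ρ k) =
      (ρ * (q + q⁻¹)) • (br (Wm ρ l) (Wp ρ (k + 1)) - br (Wm ρ k) (Wp ρ (l + 1))) ∧
    qbr (Gt ρ k) (G ρ l) - qbr (Gt ρ l) (G ρ k) =
      (ρ * (q + q⁻¹)) • (br (Wp ρ l) (Wm ρ (k + 1)) - br (Wp ρ k) (Wm ρ (l + 1))) := by
  constructor
  · rw [FP ρ k l, FP ρ l k, L1 ρ hρ k l]
    simp only [smul_sub, smul_smul, mul_comm ρ (q + q⁻¹)]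
    abel
  constructor
  · rw [FQ ρ k l, FQ ρ l k, L2 ρ hρ k l]
    simp only [smul_sub, smul_smul, mul_comm ρ (q + q⁻¹)]
    abel
  constructor
  · have hs : ρ • (br (Wm ρ l) (Wp ρ (k + 1)) - br (Wm ρ k) (Wp ρ (l + 1))) =
        (q + q⁻¹)⁻¹ • (qbr (G ρ k) (Gt ρ l) - qbr (G ρ l) (Gt ρ k)) := by
      rw [smul_sub, TP ρ k l, TP ρ l k, e6 ρ l k, qbr_comm (Gcomm ρ l k)]
      simp only [smul_sub]
      abel
    calc qbr (G ρ k) (Gt ρ l) - qbr (G ρ l) (Gt ρ k)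
        = ((q + q⁻¹) * (q + q⁻¹)⁻¹) • (qbr (G ρ k) (Gt ρ l) - qbr (G ρ l) (Gt ρ k)) := by
          rw [mul_inv_cancel₀ qq_ne_zero, one_smul]
      _ = (q + q⁻¹) • ((q + q⁻¹)⁻¹ • (qbr (G ρ k) (Gt ρ l) - qbr (G ρ l) (Gt ρ k))) := by
          rw [← smul_smul]
      _ = (q + q⁻¹) • (ρ • (br (Wm ρ l) (Wp ρ (k + 1)) - br (Wm ρ k) (Wp ρ (l + 1)))) := by
          rw [← hs]
      _ = (ρ * (q + q⁻¹)) • (br (Wm ρ l) (Wp ρ (k + 1)) - br (Wm ρ k) (Wp ρ (l + 1))) := by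
          rw [smul_smul, mul_comm]
  · have hs : ρ • (br (Wp ρ l) (Wm ρ (k + 1)) - br (Wp ρ k) (Wm ρ (l + 1))) =
        (q + q⁻¹)⁻¹ • (qbr (Gt ρ k) (G ρ l) - qbr (Gt ρ l) (G ρ k)) := by
      rw [smul_sub, UP ρ k l, UP ρ l k, e9 ρ l k, qbr_comm (Gtcomm ρ l k)]
      simp only [smul_sub]
      abel
    calc qbr (Gt ρ k) (G ρ l) - qbr (Gt ρ l) (G ρ k)
        = ((q + q⁻¹) * (q + q⁻¹)⁻¹) • (qbr (Gt ρ k) (G ρ l) - qbr (Gt ρ l) (G ρ k)) := by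
          rw [mul_inv_cancel₀ qq_ne_zero, one_smul]
      _ = (q + q⁻¹) • ((q + q⁻¹)⁻¹ • (qbr (Gt ρ k) (G ρ l) - qbr (Gt ρ l) (G ρ k))) := by
          rw [← smul_smul]
      _ = (q + q⁻¹) • (ρ • (br (Wp ρ l) (Wm ρ (k + 1)) - br (Wp ρ k) (Wm ρ (l + 1)))) := by
          rw [← hs]
      _ = (ρ * (q + q⁻¹)) • (br (Wp ρ l) (Wm ρ (k + 1)) - br (Wp ρ k) (Wm ρ (l + 1))) := by
          rw [smul_smul, mul_comm]

end Alt
end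
end

section
/- The following identities hold in Ā⟦s,t⟧; they are the denominator-cleared component form of the non-standard classical Yang–Baxter algebra [B₁(u), B₂(v)] = [r̄₂₁(v,u), B₁(u)] + [B₂(v), r̄₁₂(u,v)] satisfied by the B-matrix of the paper, giving an FRT presentation of Ā: (a) (s−t)·[w₊(t), w₋(s)] = (s·t/2)·( g₊(t) − g₋(t) + g₋(s) − g₊(s) ), together with the same identity with + and − interchanged; (b) (s−t)·[g₊(t), w₊(s)] = 16·( s·w₊(t) − t·w₊(s) ); (s−t)·[g₊(t), w₋(s)] = −16·( s·w₋(t) − t·w₋(s) ); (s−t)·[g₋(t), w₊(s)] = −16·( s·w₊(t) − t·w₊(s) ); (s−t)·[g₋(t), w₋(s)] = 16·( s·w₋(t) − t·w₋(s) ); (c) [g₊(t), g₋(s)] = 0; (d) [w₊(t), w₊(s)] = 0, [w₋(t), w₋(s)] = 0, [g₊(t), g₊(s)] = 0, [g₋(t), g₋(s)] = 0. -/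
/- STATEMENT 13: the non-standard classical Yang-Baxter generating-function
identities in Ā⟦s,t⟧. -/

noncomputable section

namespace AltCl

variable (K : Type) [Field K] [CharZero K]

/-- Commutator `[x,y] = xy - yx`. -/
def br {A : Type*} [Ring A] (x y : A) : A := x * y - y * x

/-- Generators: `wm k ↦ w_{-k}`, `wp k ↦ w_{k+1}`, `g k ↦ g_{k+1}`, `gt k ↦ g̃_{k+1}`. -/
inductive Gen : Type
  | wm : ℕ → Gen
  | wp : ℕ → Gen
  | g : ℕ → Gen
  | gt : ℕ → Gen

/-- Abbreviation in the free algebra. -/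
def fg (x : Gen) : FreeAlgebra K Gen := FreeAlgebra.ι K x

/-- The defining relations of the algebra `Ā`. -/
inductive relA : FreeAlgebra K Gen → FreeAlgebra K Gen → Prop
  | a1 (k l : ℕ) : relA (br (fg K (.wm l)) (fg K (.wp k)))
      ((2⁻¹ : K) • (fg K (.gt (k + l)) - fg K (.g (k + l))))
  | a2a (k l : ℕ) : relA (br (fg K (.gt k)) (fg K (.wm l)))
      ((16 : K) • fg K (.wm (k + l + 1)))
  | a2b (k l : ℕ) : relA (br (fg K (.wm l)) (fg K (.g k)))
      ((16 : K) • fg K (.wm (k + l + 1)))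
  | a3a (k l : ℕ) : relA (br (fg K (.wp l)) (fg K (.gt k)))
      ((16 : K) • fg K (.wp (k + l + 1)))
  | a3b (k l : ℕ) : relA (br (fg K (.g k)) (fg K (.wp l)))
      ((16 : K) • fg K (.wp (k + l + 1)))
  | a4a (k l : ℕ) : relA (br (fg K (.wm k)) (fg K (.wm l))) 0
  | a4b (k l : ℕ) : relA (br (fg K (.wp k)) (fg K (.wp l))) 0
  | a4c (k l : ℕ) : relA (br (fg K (.g k)) (fg K (.g l))) 0
  | a4d (k l : ℕ) : relA (br (fg K (.gt k)) (fg K (.gt l))) 0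

/-- The algebra `Ā`. -/
abbrev Abar : Type := RingQuot (relA K)

/-- `w_{-k}` in `Ā`. -/
def wm (k : ℕ) : Abar K := RingQuot.mkAlgHom K (relA K) (fg K (.wm k))
/-- `w_{k+1}` in `Ā`. -/
def wp (k : ℕ) : Abar K := RingQuot.mkAlgHom K (relA K) (fg K (.wp k))
/-- `g_{k+1}` in `Ā`. -/
def g (k : ℕ) : Abar K := RingQuot.mkAlgHom K (relA K) (fg K (.g k))
/-- `g̃_{k+1}` in `Ā`. -/
def gt (k : ℕ) : Abar K := RingQuot.mkAlgHom K (relA K) (fg K (.gt k))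

open scoped Classical

/-- The generating function `Σ_{k≥0} f k · x^{k+1}` in the variable `x_i`
(`i : Fin 2`; `i = 0` is `s`, `i = 1` is `t`), with coefficients in `Ā`. -/
def gfun (i : Fin 2) (f : ℕ → Abar K) : MvPowerSeries (Fin 2) (Abar K) :=
  fun d => if 1 ≤ d i ∧ d = Finsupp.single i (d i) then f (d i - 1) else 0

/-- `w₊` in the variable `x_i`. -/
def wps (i : Fin 2) : MvPowerSeries (Fin 2) (Abar K) := gfun K i (wm K)
/-- `w₋` in the variable `x_i`. -/
def wms (i : Fin 2) : MvPowerSeries (Fin 2) (Abar K) := gfun K i (wp K)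
/-- `g₊` in the variable `x_i`. -/
def gps (i : Fin 2) : MvPowerSeries (Fin 2) (Abar K) := gfun K i (g K)
/-- `g₋` in the variable `x_i`. -/
def gms (i : Fin 2) : MvPowerSeries (Fin 2) (Abar K) := gfun K i (gt K)

/-- The variable `s`. -/
def ps : MvPowerSeries (Fin 2) (Abar K) := MvPowerSeries.X 0
/-- The variable `t`. -/
def pt : MvPowerSeries (Fin 2) (Abar K) := MvPowerSeries.X 1

set_option linter.unusedSectionVars false
set_option maxHeartbeats 1000000

section Aux
variable {K : Type} [Field K] [CharZero K]

lemma rel_eq {x y : FreeAlgebra K Gen} (h : relA K x y) :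
    RingQuot.mkAlgHom K (relA K) x = RingQuot.mkAlgHom K (relA K) y :=
  RingQuot.mkAlgHom_rel K h

lemma r1 (k l : ℕ) : br (wm K l) (wp K k) = (2⁻¹ : K) • (gt K (k+l) - g K (k+l)) := by
  simpa [br, map_sub, map_mul, map_smul, wm, wp, g, gt] using rel_eq (relA.a1 (K := K) k l)

lemma r2a (k l : ℕ) : br (gt K k) (wm K l) = (16 : K) • wm K (k+l+1) := by
  simpa [br, map_sub, map_mul, map_smul, wm, wp, g, gt] using rel_eq (relA.a2a (K := K) k l)

lemma r2b (k l : ℕ) : br (wm K l) (g K k) = (16 : K) • wm K (k+l+1) := by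
  simpa [br, map_sub, map_mul, map_smul, wm, wp, g, gt] using rel_eq (relA.a2b (K := K) k l)

lemma r3a (k l : ℕ) : br (wp K l) (gt K k) = (16 : K) • wp K (k+l+1) := by
  simpa [br, map_sub, map_mul, map_smul, wm, wp, g, gt] using rel_eq (relA.a3a (K := K) k l)

lemma r3b (k l : ℕ) : br (g K k) (wp K l) = (16 : K) • wp K (k+l+1) := by
  simpa [br, map_sub, map_mul, map_smul, wm, wp, g, gt] using rel_eq (relA.a3b (K := K) k l)

lemma r4a (k l : ℕ) : br (wm K k) (wm K l) = 0 := by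
  simpa [br, map_sub, map_mul, wm] using rel_eq (relA.a4a (K := K) k l)

lemma r4b (k l : ℕ) : br (wp K k) (wp K l) = 0 := by
  simpa [br, map_sub, map_mul, wp] using rel_eq (relA.a4b (K := K) k l)

lemma r4c (k l : ℕ) : br (g K k) (g K l) = 0 := by
  simpa [br, map_sub, map_mul, g] using rel_eq (relA.a4c (K := K) k l)

lemma r4d (k l : ℕ) : br (gt K k) (gt K l) = 0 := by
  simpa [br, map_sub, map_mul, gt] using rel_eq (relA.a4d (K := K) k l)

-- bracket API
variable {A : Type*} [Ring A] [Algebra K A]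

lemma br_neg_swap (x y : A) : br x y = - br y x := by simp only [br]; noncomm_ring

lemma br_neg_left (x y : A) : br (-x) y = - br x y := by simp only [br]; noncomm_ring

lemma br_smul_left (c : K) (x y : A) : br (c • x) y = c • br x y := by
  simp [br, smul_sub, smul_mul_assoc, mul_smul_comm]

lemma br_smul_right (c : K) (x y : A) : br x (c • y) = c • br x y := by
  simp [br, smul_sub, smul_mul_assoc, mul_smul_comm]

lemma br_sub_right (x y z : A) : br x (y - z) = br x y - br x z := by
  simp only [br]; noncomm_ring

lemma br_jacobi (x y z : A) : br x (br y z) = br (br x y) z + br y (br x z) := by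
  simp only [br]; noncomm_ring

lemma r_g_gt (a b : ℕ) : br (g K a) (gt K b) = 0 := by
  have h0 : br (wm K (a+1)) (wp K b) = (2⁻¹ : K) • (gt K (a+b+1) - g K (a+b+1)) := by
    have h := r1 (K := K) b (a+1)
    rw [show b+(a+1) = a+b+1 by omega] at h
    exact h
  have h1 : gt K b - g K b = (2 : K) • br (wm K 0) (wp K b) := by
    rw [r1 b 0, smul_smul]
    norm_num
  have e1 : br (g K a) (wm K 0) = -((16 : K) • wm K (a+1)) := by
    rw [br_neg_swap, r2b]
  have e2 : br (wm K 0) (br (g K a) (wp K b)) = (16 : K) • (2⁻¹ : K) • (gt K (a+b+1) - g K (a+b+1)) := by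
    rw [r3b, br_smul_right]
    have h := r1 (K := K) (a+b+1) 0
    rw [show a+b+1+0 = a+b+1 by omega] at h
    rw [h]
  calc br (g K a) (gt K b) = br (g K a) (gt K b - g K b) := by
        rw [br_sub_right, r4c, sub_zero]
    _ = (2 : K) • (br (br (g K a) (wm K 0)) (wp K b) + br (wm K 0) (br (g K a) (wp K b))) := by
        rw [h1, br_smul_right, br_jacobi]
    _ = 0 := by
        rw [e1, e2, br_neg_left, br_smul_left, h0]
        simp
end Aux

section Coeff
variable {K : Type} [Field K] [CharZero K]

lemma fin2_cases : ∀ (i j x : Fin 2), i ≠ j → x = i ∨ x = j := by decide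

lemma eq_single_iff {i j : Fin 2} (hij : i ≠ j) (d : Fin 2 →₀ ℕ) :
    d = Finsupp.single i (d i) ↔ d j = 0 := by
  constructor
  · intro h
    conv_lhs => rw [h]
    simp [Finsupp.single_apply, hij]
  · intro h
    ext x
    rcases fin2_cases i j x hij with rfl | rfl <;>
      simp [Finsupp.single_apply, hij, h]

lemma sum_single {i j : Fin 2} (hij : i ≠ j) (d : Fin 2 →₀ ℕ) :
    Finsupp.single i (d i) + Finsupp.single j (d j) = d := by
  ext x
  rcases fin2_cases i j x hij with rfl | rfl <;>
    simp [Finsupp.single_apply, hij, hij.symm]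

lemma coeff_gfun {i j : Fin 2} (hij : i ≠ j) (f : ℕ → Abar K) (d : Fin 2 →₀ ℕ) :
    MvPowerSeries.coeff (R := Abar K) d (gfun K i f) =
      if 1 ≤ d i ∧ d j = 0 then f (d i - 1) else 0 := by
  rw [MvPowerSeries.coeff_apply]
  show (if 1 ≤ d i ∧ d = Finsupp.single i (d i) then f (d i - 1) else 0) = _
  simp only [eq_single_iff hij]

lemma coeff_X_mul' (i : Fin 2) (φ : MvPowerSeries (Fin 2) (Abar K)) (d : Fin 2 →₀ ℕ) :
    MvPowerSeries.coeff (R := Abar K) d (MvPowerSeries.X i * φ) =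
      if 1 ≤ d i then MvPowerSeries.coeff (R := Abar K) (d - Finsupp.single i 1) φ else 0 := by
  rw [MvPowerSeries.X, MvPowerSeries.coeff_monomial_mul]
  simp [Finsupp.single_le_iff]

lemma coeff_gfun_mul_gfun {i j : Fin 2} (hij : i ≠ j) (f h : ℕ → Abar K) (d : Fin 2 →₀ ℕ) :
    MvPowerSeries.coeff (R := Abar K) d (gfun K i f * gfun K j h) =
      if 1 ≤ d i ∧ 1 ≤ d j then f (d i - 1) * h (d j - 1) else 0 := by
  classical
  rw [MvPowerSeries.coeff_mul]
  rw [Finset.sum_eq_single (Finsupp.single i (d i), Finsupp.single j (d j))]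
  · rw [coeff_gfun hij, coeff_gfun hij.symm]
    have e1 : (Finsupp.single i (d i)) i = d i := Finsupp.single_eq_same
    have e2 : (Finsupp.single i (d i)) j = 0 := Finsupp.single_eq_of_ne' hij
    have e3 : (Finsupp.single j (d j)) j = d j := Finsupp.single_eq_same
    have e4 : (Finsupp.single j (d j)) i = 0 := Finsupp.single_eq_of_ne' hij.symm
    rw [e1, e2, e3, e4]
    simp only [and_true]
    by_cases hc : 1 ≤ d i ∧ 1 ≤ d j
    · rw [if_pos hc.1, if_pos hc.2, if_pos hc]
    · rw [if_neg hc]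
      rcases Decidable.not_and_iff_or_not.mp hc with hc' | hc'
      · rw [if_neg hc', zero_mul]
      · rw [if_neg hc', mul_zero]
  · rintro ⟨b1, b2⟩ hb hne
    rw [Finset.HasAntidiagonal.mem_antidiagonal] at hb
    rw [coeff_gfun hij, coeff_gfun hij.symm]
    split_ifs with h1 h2
    · exfalso
      apply hne
      have e1 : b1 = Finsupp.single i (b1 i) := (eq_single_iff hij b1).mpr h1.2
      have e2 : b2 = Finsupp.single j (b2 j) := (eq_single_iff hij.symm b2).mpr h2.2
      have hdi : d i = b1 i := by
        have := congrArg (fun x => x i) hb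
        simpa [h2.2] using this.symm
      have hdj : d j = b2 j := by
        have := congrArg (fun x => x j) hb
        simpa [h1.2] using this.symm
      rw [Prod.mk.injEq]
      exact ⟨by rw [hdi, ← e1], by rw [hdj, ← e2]⟩
    · rw [mul_zero]
    · rw [zero_mul]
    · rw [zero_mul]
  · intro hmem
    exact absurd (Finset.HasAntidiagonal.mem_antidiagonal.mpr (sum_single hij d)) hmem

lemma coeff_br_gfun {i j : Fin 2} (hij : i ≠ j) (f h : ℕ → Abar K) (d : Fin 2 →₀ ℕ) :
    MvPowerSeries.coeff (R := Abar K) d (br (gfun K i f) (gfun K j h)) =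
      if 1 ≤ d i ∧ 1 ≤ d j then br (f (d i - 1)) (h (d j - 1)) else 0 := by
  simp only [br, map_sub, coeff_gfun_mul_gfun hij, coeff_gfun_mul_gfun hij.symm]
  by_cases hc : 1 ≤ d i ∧ 1 ≤ d j
  · rw [if_pos hc, if_pos hc, if_pos ⟨hc.2, hc.1⟩]
  · rw [if_neg hc, if_neg hc, if_neg (fun hc' => hc ⟨hc'.2, hc'.1⟩), sub_zero]

end Coeff

section Ids
variable {K : Type} [Field K] [CharZero K]

lemma h10 : (1 : Fin 2) ≠ 0 := by decide
lemma h01 : (0 : Fin 2) ≠ 1 := by decide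

lemma sub_same (i : Fin 2) (d : Fin 2 →₀ ℕ) :
    (d - Finsupp.single i (1:ℕ)) i = d i - 1 := by
  simp [Finsupp.tsub_apply]

lemma sub_other {i j : Fin 2} (hij : i ≠ j) (d : Fin 2 →₀ ℕ) :
    (d - Finsupp.single i (1:ℕ)) j = d j := by
  simp [Finsupp.tsub_apply, Finsupp.single_eq_of_ne' hij]

lemma coeff_ksmul (c : K) (φ : MvPowerSeries (Fin 2) (Abar K)) (d : Fin 2 →₀ ℕ) :
    MvPowerSeries.coeff (R := Abar K) d (c • φ) = c • MvPowerSeries.coeff (R := Abar K) d φ := rfl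

lemma id_d1 : br (wps K 1) (wps K 0) = 0 := by
  apply MvPowerSeries.ext; intro d
  rw [show wps K 1 = gfun K 1 (wm K) from rfl, show wps K 0 = gfun K 0 (wm K) from rfl,
    coeff_br_gfun h10, (MvPowerSeries.coeff (R := Abar K) d).map_zero]
  split_ifs with h
  · exact r4a _ _
  · rfl

lemma id_d2 : br (wms K 1) (wms K 0) = 0 := by
  apply MvPowerSeries.ext; intro d
  rw [show wms K 1 = gfun K 1 (wp K) from rfl, show wms K 0 = gfun K 0 (wp K) from rfl,
    coeff_br_gfun h10, (MvPowerSeries.coeff (R := Abar K) d).map_zero]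
  split_ifs with h
  · exact r4b _ _
  · rfl

lemma id_d3 : br (gps K 1) (gps K 0) = 0 := by
  apply MvPowerSeries.ext; intro d
  rw [show gps K 1 = gfun K 1 (g K) from rfl, show gps K 0 = gfun K 0 (g K) from rfl,
    coeff_br_gfun h10, (MvPowerSeries.coeff (R := Abar K) d).map_zero]
  split_ifs with h
  · exact r4c _ _
  · rfl

lemma id_d4 : br (gms K 1) (gms K 0) = 0 := by
  apply MvPowerSeries.ext; intro d
  rw [show gms K 1 = gfun K 1 (gt K) from rfl, show gms K 0 = gfun K 0 (gt K) from rfl,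
    coeff_br_gfun h10, (MvPowerSeries.coeff (R := Abar K) d).map_zero]
  split_ifs with h
  · exact r4d _ _
  · rfl

lemma id_c : br (gps K 1) (gms K 0) = 0 := by
  apply MvPowerSeries.ext; intro d
  rw [show gps K 1 = gfun K 1 (g K) from rfl, show gms K 0 = gfun K 0 (gt K) from rfl,
    coeff_br_gfun h10, (MvPowerSeries.coeff (R := Abar K) d).map_zero]
  split_ifs with h
  · exact r_g_gt _ _
  · rfl

lemma id_b1 : (ps K - pt K) * br (gps K 1) (wps K 0) =
    (16 : K) • (ps K * wps K 1 - pt K * wps K 0) := by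
  apply MvPowerSeries.ext; intro d
  rw [show gps K 1 = gfun K 1 (g K) from rfl, show wps K 0 = gfun K 0 (wm K) from rfl,
    show wps K 1 = gfun K 1 (wm K) from rfl, show ps K = MvPowerSeries.X 0 from rfl,
    show pt K = MvPowerSeries.X 1 from rfl]
  simp only [sub_mul, map_sub, coeff_ksmul, coeff_X_mul', coeff_br_gfun h10,
    coeff_gfun h10, coeff_gfun h01, sub_same, sub_other h01, sub_other h10]
  generalize d 0 = m
  generalize d 1 = n
  rcases m with _ | _ | m <;> rcases n with _ | _ | n <;>
    simp [r2b, br_neg_swap (g K _) (wm K _), Nat.add_comm, Nat.add_left_comm, Nat.add_assoc]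

end Ids

section Ids2
variable {K : Type} [Field K] [CharZero K]

lemma id_b2 : (ps K - pt K) * br (gps K 1) (wms K 0) =
    -((16 : K) • (ps K * wms K 1 - pt K * wms K 0)) := by
  apply MvPowerSeries.ext; intro d
  rw [show gps K 1 = gfun K 1 (g K) from rfl, show wms K 0 = gfun K 0 (wp K) from rfl,
    show wms K 1 = gfun K 1 (wp K) from rfl, show ps K = MvPowerSeries.X 0 from rfl,
    show pt K = MvPowerSeries.X 1 from rfl]
  simp only [sub_mul, map_sub, map_neg, coeff_ksmul, coeff_X_mul', coeff_br_gfun h10,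
    coeff_gfun h10, coeff_gfun h01, sub_same, sub_other h01, sub_other h10]
  generalize d 0 = m
  generalize d 1 = n
  rcases m with _ | _ | m <;> rcases n with _ | _ | n <;>
    simp [r3b, Nat.add_comm, Nat.add_left_comm, Nat.add_assoc]

lemma id_b3 : (ps K - pt K) * br (gms K 1) (wps K 0) =
    -((16 : K) • (ps K * wps K 1 - pt K * wps K 0)) := by
  apply MvPowerSeries.ext; intro d
  rw [show gms K 1 = gfun K 1 (gt K) from rfl, show wps K 0 = gfun K 0 (wm K) from rfl,
    show wps K 1 = gfun K 1 (wm K) from rfl, show ps K = MvPowerSeries.X 0 from rfl,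
    show pt K = MvPowerSeries.X 1 from rfl]
  simp only [sub_mul, map_sub, map_neg, coeff_ksmul, coeff_X_mul', coeff_br_gfun h10,
    coeff_gfun h10, coeff_gfun h01, sub_same, sub_other h01, sub_other h10]
  generalize d 0 = m
  generalize d 1 = n
  rcases m with _ | _ | m <;> rcases n with _ | _ | n <;>
    simp [r2a, Nat.add_comm, Nat.add_left_comm, Nat.add_assoc]

lemma id_b4 : (ps K - pt K) * br (gms K 1) (wms K 0) =
    (16 : K) • (ps K * wms K 1 - pt K * wms K 0) := by
  apply MvPowerSeries.ext; intro d
  rw [show gms K 1 = gfun K 1 (gt K) from rfl, show wms K 0 = gfun K 0 (wp K) from rfl,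
    show wms K 1 = gfun K 1 (wp K) from rfl, show ps K = MvPowerSeries.X 0 from rfl,
    show pt K = MvPowerSeries.X 1 from rfl]
  simp only [sub_mul, map_sub, coeff_ksmul, coeff_X_mul', coeff_br_gfun h10,
    coeff_gfun h10, coeff_gfun h01, sub_same, sub_other h01, sub_other h10]
  generalize d 0 = m
  generalize d 1 = n
  rcases m with _ | _ | m <;> rcases n with _ | _ | n <;>
    simp [br_neg_swap (gt K _) (wp K _), r3a, Nat.add_comm, Nat.add_left_comm, Nat.add_assoc]

lemma id_a1 : (ps K - pt K) * br (wps K 1) (wms K 0) =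
    (2⁻¹ : K) • (ps K * pt K * (gps K 1 - gms K 1 + gms K 0 - gps K 0)) := by
  apply MvPowerSeries.ext; intro d
  rw [show wps K 1 = gfun K 1 (wm K) from rfl, show wms K 0 = gfun K 0 (wp K) from rfl,
    show gps K 1 = gfun K 1 (g K) from rfl, show gms K 1 = gfun K 1 (gt K) from rfl,
    show gps K 0 = gfun K 0 (g K) from rfl, show gms K 0 = gfun K 0 (gt K) from rfl,
    show ps K = MvPowerSeries.X 0 from rfl, show pt K = MvPowerSeries.X 1 from rfl,
    mul_assoc]
  simp only [sub_mul, map_sub, map_add, coeff_ksmul, coeff_X_mul', coeff_br_gfun h10,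
    coeff_gfun h10, coeff_gfun h01, sub_same, sub_other h01, sub_other h10]
  generalize d 0 = m
  generalize d 1 = n
  rcases m with _ | _ | m <;> rcases n with _ | _ | n <;>
    simp [r1, smul_sub, smul_add, Nat.add_comm, Nat.add_left_comm, Nat.add_assoc]

lemma id_a2 : (ps K - pt K) * br (wms K 1) (wps K 0) =
    (2⁻¹ : K) • (ps K * pt K * (gms K 1 - gps K 1 + gps K 0 - gms K 0)) := by
  apply MvPowerSeries.ext; intro d
  rw [show wms K 1 = gfun K 1 (wp K) from rfl, show wps K 0 = gfun K 0 (wm K) from rfl,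
    show gps K 1 = gfun K 1 (g K) from rfl, show gms K 1 = gfun K 1 (gt K) from rfl,
    show gps K 0 = gfun K 0 (g K) from rfl, show gms K 0 = gfun K 0 (gt K) from rfl,
    show ps K = MvPowerSeries.X 0 from rfl, show pt K = MvPowerSeries.X 1 from rfl,
    mul_assoc]
  simp only [sub_mul, map_sub, map_add, coeff_ksmul, coeff_X_mul', coeff_br_gfun h10,
    coeff_gfun h10, coeff_gfun h01, sub_same, sub_other h01, sub_other h10]
  generalize d 0 = m
  generalize d 1 = n
  rcases m with _ | _ | m <;> rcases n with _ | _ | n <;>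
    simp [br_neg_swap (wp K _) (wm K _), r1, smul_sub, smul_add,
      Nat.add_comm, Nat.add_left_comm, Nat.add_assoc]

end Ids2
/-- The denominator-cleared component form, in `Ā⟦s,t⟧`, of the non-standard
classical Yang-Baxter algebra satisfied by the `B`-matrix of the paper. -/
theorem statement13 :
    -- (a)
    ((ps K - pt K) * br (wps K 1) (wms K 0) =
        (2⁻¹ : K) • (ps K * pt K * (gps K 1 - gms K 1 + gms K 0 - gps K 0)) ∧
     (ps K - pt K) * br (wms K 1) (wps K 0) =
        (2⁻¹ : K) • (ps K * pt K * (gms K 1 - gps K 1 + gps K 0 - gms K 0))) ∧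
    -- (b)
    ((ps K - pt K) * br (gps K 1) (wps K 0) =
        (16 : K) • (ps K * wps K 1 - pt K * wps K 0) ∧
     (ps K - pt K) * br (gps K 1) (wms K 0) =
        -((16 : K) • (ps K * wms K 1 - pt K * wms K 0)) ∧
     (ps K - pt K) * br (gms K 1) (wps K 0) =
        -((16 : K) • (ps K * wps K 1 - pt K * wps K 0)) ∧
     (ps K - pt K) * br (gms K 1) (wms K 0) =
        (16 : K) • (ps K * wms K 1 - pt K * wms K 0)) ∧
    -- (c)
    (br (gps K 1) (gms K 0) = 0) ∧
    -- (d)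
    (br (wps K 1) (wps K 0) = 0 ∧ br (wms K 1) (wms K 0) = 0 ∧
     br (gps K 1) (gps K 0) = 0 ∧ br (gms K 1) (gms K 0) = 0) := by
  exact ⟨⟨id_a1, id_a2⟩, ⟨id_b1, id_b2, id_b3, id_b4⟩, id_c, id_d1, id_d2, id_d3, id_d4⟩

end AltCl
end
end
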